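/- Let M ∈ ℝ^{n×n} and let M₁ ∈ ℝ^{s×n} consist of a subset S of s rows of M, with M₁₁ ∈ ℝ^{s×s} the submatrix of M on rows and columns S. If M is symmetric positive semidefinite and rank(M₁₁) = rank(M), then M = M₁ᵀ M₁₁⁺ M₁, where M₁₁⁺ denotes the Moore–Penrose pseudoinverse. -/

import Mathlib

open Matrix

/-- Exact Nyström reconstruction: if `M` is symmetric PSD, `M₁ = M[S,:]` is a row
restriction of `M`, `M₁₁ = M[S,S]`, `rank M₁₁ = rank M`, and `P` is the Moore–Penrose
pseudoinverse of `M₁₁` (characterized by the four Penrose conditions), then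
`M = M₁ᵀ P M₁`. -/
theorem nystrom_reconstruction {n s : ℕ}
    (M : Matrix (Fin n) (Fin n) ℝ) (e : Fin s → Fin n) (he : Function.Injective e)
    (hM : M.PosSemidef)
    (M₁ : Matrix (Fin s) (Fin n) ℝ) (hM₁ : M₁ = M.submatrix e id)
    (M₁₁ : Matrix (Fin s) (Fin s) ℝ) (hM₁₁ : M₁₁ = M.submatrix e e)
    (hrank : M₁₁.rank = M.rank)
    (P : Matrix (Fin s) (Fin s) ℝ)
    (hP1 : M₁₁ * P * M₁₁ = M₁₁) (hP2 : P * M₁₁ * P = P)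
    (hP3 : (M₁₁ * P)ᵀ = M₁₁ * P) (hP4 : (P * M₁₁)ᵀ = P * M₁₁) :
    M = M₁ᵀ * P * M₁ := by
  obtain ⟨B, hB⟩ : ∃ B : Matrix (Fin n) (Fin n) ℝ, M = Bᴴ * B := by
    open scoped MatrixOrder in exact CStarAlgebra.nonneg_iff_eq_star_mul_self.mp hM.nonneg
  rw [Matrix.conjTranspose_eq_transpose_of_trivial] at hB
  set A₁ : Matrix (Fin n) (Fin s) ℝ := B.submatrix id e with hA₁
  have hM11 : M₁₁ = A₁ᵀ * A₁ := by
    subst hB hM₁₁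
    ext i j
    simp [Matrix.mul_apply, hA₁]
  have hM1 : M₁ = A₁ᵀ * B := by
    subst hB hM₁
    ext i j
    simp [Matrix.mul_apply, hA₁]
  -- ranks
  have hr : A₁.rank = B.rank := by
    rw [← Matrix.rank_transpose_mul_self, ← hM11, hrank, hB,
      Matrix.rank_transpose_mul_self]
  -- ranges
  have hle : LinearMap.range A₁.mulVecLin ≤ LinearMap.range B.mulVecLin := by
    rintro y ⟨x, rfl⟩
    refine ⟨fun k => ∑ j, if e j = k then x j else 0, ?_⟩
    ext i
    simp only [Matrix.mulVecLin_apply, Matrix.mulVec, dotProduct,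
      Finset.mul_sum]
    rw [Finset.sum_comm]
    refine Finset.sum_congr rfl fun j _ => ?_
    rw [Finset.sum_eq_single (e j)]
    · simp [hA₁]
    · intro k _ hk; simp [Ne.symm hk]
    · simp
  have hrange : LinearMap.range A₁.mulVecLin = LinearMap.range B.mulVecLin :=
    Submodule.eq_of_le_of_finrank_le hle (le_of_eq hr.symm)
  -- factor B = A₁ * C
  have hcol : ∀ k, ∃ c : Fin s → ℝ, A₁ *ᵥ c = fun i => B i k := by
    intro k
    have : (fun i => B i k) ∈ LinearMap.range B.mulVecLin := by
      refine ⟨Pi.single k 1, ?_⟩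
      ext i
      simp [Matrix.mulVecLin_apply, Matrix.mulVec_single]
    rw [← hrange] at this
    obtain ⟨c, hc⟩ := this
    exact ⟨c, hc⟩
  choose c hc using hcol
  set C : Matrix (Fin s) (Fin n) ℝ := fun j k => c k j with hC
  have hBC : B = A₁ * C := by
    ext i k
    have := congrFun (hc k) i
    rw [Matrix.mul_apply]
    simpa [Matrix.mul_apply, Matrix.mulVec, dotProduct, hC] using this.symm
  have hM1' : M₁ = M₁₁ * C := by
    rw [hM1, hM11, hBC, Matrix.mul_assoc]
  have hMsym : M₁₁ᵀ = M₁₁ := by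
    rw [hM11]; simp [Matrix.transpose_mul]
  calc M = Bᵀ * B := hB
    _ = Cᵀ * (A₁ᵀ * A₁) * C := by rw [hBC]; simp [Matrix.transpose_mul, Matrix.mul_assoc]
    _ = Cᵀ * (M₁₁ * P * M₁₁) * C := by rw [hP1, hM11]
    _ = M₁ᵀ * P * M₁ := by rw [hM1', transpose_mul, hMsym]; simp [Matrix.mul_assoc]
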